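/- Let t ≥ 2 and let x⁽¹⁾, …, x⁽ᵗ⁾ be nonzero quaternions in ℍ(ℚ). For each nonzero x = x₀ + x₁i + x₂j + x₃k ∈ ℍ(ℚ) let ϑ(x) be the 3×3 rational matrix (1/|x|²)·[[x₀² + x₁² − x₂² − x₃², 2(x₁x₂ − x₀x₃), 2(x₁x₃ + x₀x₂)], [2(x₁x₂ + x₀x₃), x₀² − x₁² + x₂² − x₃², 2(x₂x₃ − x₀x₁)], [2(x₁x₃ − x₀x₂), 2(x₂x₃ + x₀x₁), x₀² − x₁² − x₂² + x₃²]], where |x|² = x₀² + x₁² + x₂² + x₃². Then the matrices ϑ(x⁽¹⁾), …, ϑ(x⁽ᵗ⁾) freely generate a free subgroup of rank t of the group of invertible 3×3 rational matrices if and only if x⁽¹⁾, …, x⁽ᵗ⁾ freely generate a free subgroup of rank t of the group of units of ℍ(ℚ). -/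

import Mathlib

/-- The conjugation-rotation matrix `ϑ(x)` of a quaternion `x ∈ ℍ(ℚ)`:
it represents the `ℚ`-linear map `y ↦ x y x⁻¹` on purely imaginary
quaternions, identified with `ℚ³`. -/
noncomputable def quaternionRotation (x : Quaternion ℚ) : Matrix (Fin 3) (Fin 3) ℚ :=
  (1 / (x.re ^ 2 + x.imI ^ 2 + x.imJ ^ 2 + x.imK ^ 2)) •
    !![x.re ^ 2 + x.imI ^ 2 - x.imJ ^ 2 - x.imK ^ 2,
          2 * (x.imI * x.imJ - x.re * x.imK), 2 * (x.imI * x.imK + x.re * x.imJ);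
       2 * (x.imI * x.imJ + x.re * x.imK),
          x.re ^ 2 - x.imI ^ 2 + x.imJ ^ 2 - x.imK ^ 2,
          2 * (x.imJ * x.imK - x.re * x.imI);
       2 * (x.imI * x.imK - x.re * x.imJ), 2 * (x.imJ * x.imK + x.re * x.imI),
          x.re ^ 2 - x.imI ^ 2 - x.imJ ^ 2 + x.imK ^ 2]

/-- For nonzero `x`, the rotation matrix `ϑ(x)` has determinant `1`
(in particular it is invertible). -/
lemma quaternionRotation_det (x : Quaternion ℚ) (hx : x ≠ 0) :
    (quaternionRotation x).det = 1 := by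
  have hn : x.re ^ 2 + x.imI ^ 2 + x.imJ ^ 2 + x.imK ^ 2 ≠ 0 := by
    rw [← Quaternion.normSq_def']
    exact fun h => hx (Quaternion.normSq_eq_zero.mp h)
  unfold quaternionRotation
  rw [Matrix.det_smul, Matrix.det_fin_three]
  simp only [Matrix.cons_val', Matrix.cons_val_zero, Matrix.cons_val_one,
    Matrix.head_cons, Matrix.empty_val', Matrix.cons_val_fin_one,
    Matrix.head_fin_const, Matrix.cons_val_two, Matrix.tail_cons, Fintype.card_fin,
    Matrix.of_apply]
  field_simp
  ring

-- ===== auxiliary lemmas =====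

lemma qnorm_ne (x : Quaternion ℚ) (hx : x ≠ 0) :
    x.re ^ 2 + x.imI ^ 2 + x.imJ ^ 2 + x.imK ^ 2 ≠ 0 := by
  rw [← Quaternion.normSq_def']
  exact fun h => hx (Quaternion.normSq_eq_zero.mp h)

lemma quaternionRotation_one : quaternionRotation 1 = 1 := by
  unfold quaternionRotation
  norm_num [Quaternion.re_one, Quaternion.imI_one, Quaternion.imJ_one, Quaternion.imK_one]
  ext i j
  fin_cases i <;> fin_cases j <;> simp [Matrix.one_apply] <;> rfl

set_option maxHeartbeats 3200000 in
lemma quaternionRotation_mul (x y : Quaternion ℚ) (hx : x ≠ 0) (hy : y ≠ 0) :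
    quaternionRotation (x * y) = quaternionRotation x * quaternionRotation y := by
  have hnx := qnorm_ne x hx
  have hny := qnorm_ne y hy
  have hmul : (x*y).re ^ 2 + (x*y).imI ^ 2 + (x*y).imJ ^ 2 + (x*y).imK ^ 2
      = (x.re ^ 2 + x.imI ^ 2 + x.imJ ^ 2 + x.imK ^ 2) *
        (y.re ^ 2 + y.imI ^ 2 + y.imJ ^ 2 + y.imK ^ 2) := by
    simp only [Quaternion.re_mul, Quaternion.imI_mul, Quaternion.imJ_mul, Quaternion.imK_mul]
    ring
  unfold quaternionRotation
  rw [Matrix.smul_mul, Matrix.mul_smul, smul_smul, Matrix.mul_fin_three, hmul,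
    div_mul_div_comm, one_mul]
  congr 1
  simp only [Quaternion.re_mul, Quaternion.imI_mul, Quaternion.imJ_mul, Quaternion.imK_mul]
  ext i j
  fin_cases i <;> fin_cases j <;>
    simp only [Matrix.cons_val', Matrix.cons_val_zero, Matrix.cons_val_one, Matrix.head_cons,
      Matrix.empty_val', Matrix.cons_val_fin_one, Matrix.head_fin_const, Matrix.cons_val_two,
      Matrix.tail_cons, Fin.isValue] <;> ring

/-- The rotation map as a group homomorphism from the units of `ℍ(ℚ)` to `GL₃(ℚ)`. -/
noncomputable def thetaHom : (Quaternion ℚ)ˣ →* Matrix.GeneralLinearGroup (Fin 3) ℚ where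
  toFun u := Matrix.GeneralLinearGroup.mkOfDetNeZero (quaternionRotation u)
    (by rw [quaternionRotation_det _ u.ne_zero]; norm_num)
  map_one' := Units.ext quaternionRotation_one
  map_mul' u v := Units.ext (quaternionRotation_mul u v u.ne_zero v.ne_zero)

lemma thetaHom_val (u : (Quaternion ℚ)ˣ) :
    (thetaHom u : Matrix (Fin 3) (Fin 3) ℚ) = quaternionRotation u := rfl

/-- If `ϑ(x) = 1` then `x` is a real scalar. -/
lemma quaternionRotation_eq_one (x : Quaternion ℚ) (hx : x ≠ 0)
    (h : quaternionRotation x = 1) : x = ((x.re : ℚ) : Quaternion ℚ) := by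
  have hn := qnorm_ne x hx
  have h00 := congrFun (congrFun h 0) 0
  have h11 := congrFun (congrFun h 1) 1
  unfold quaternionRotation at h00 h11
  simp [Matrix.one_apply, div_eq_iff hn] at h00 h11
  have h00' : x.re ^ 2 + x.imI ^ 2 - x.imJ ^ 2 - x.imK ^ 2
      = x.re ^ 2 + x.imI ^ 2 + x.imJ ^ 2 + x.imK ^ 2 := by
    field_simp at h00; linarith
  have h11' : x.re ^ 2 - x.imI ^ 2 + x.imJ ^ 2 - x.imK ^ 2
      = x.re ^ 2 + x.imI ^ 2 + x.imJ ^ 2 + x.imK ^ 2 := by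
    field_simp at h11; linarith
  have hJK : x.imJ ^ 2 + x.imK ^ 2 = 0 := by linarith
  have hIK : x.imI ^ 2 + x.imK ^ 2 = 0 := by linarith
  have hJ : x.imJ = 0 := by nlinarith [sq_nonneg x.imJ, sq_nonneg x.imK]
  have hK : x.imK = 0 := by nlinarith [sq_nonneg x.imJ, sq_nonneg x.imK]
  have hI : x.imI = 0 := by nlinarith [sq_nonneg x.imI, sq_nonneg x.imK]
  ext <;> simp [hI, hJ, hK]

open FreeGroup in
lemma invRev_append' {α : Type*} (L₁ L₂ : List (α × Bool)) :
    invRev (L₁ ++ L₂) = invRev L₂ ++ invRev L₁ := by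
  simp [invRev]

open FreeGroup in
lemma freeGroup_commute_of_eq_one {t : ℕ} (ht : 2 ≤ t) (w : FreeGroup (Fin t))
    (h : ∀ i : Fin t, FreeGroup.of i * w = w * FreeGroup.of i) : w = 1 := by
  by_contra hw
  have hL : w.toWord ≠ [] := fun h' => hw (FreeGroup.toWord_eq_nil_iff.mp h')
  obtain ⟨hd, tl, hLdef⟩ := List.exists_cons_of_ne_nil hL
  set z : Fin t := ⟨0, by omega⟩
  set o : Fin t := ⟨1, by omega⟩
  have hzo : z ≠ o := by simp [z, o, Fin.ext_iff]
  set j : Fin t := if hd.1 = z then o else z with hjdef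
  have hjne : j ≠ hd.1 := by
    by_cases hc : hd.1 = z
    · simp [hjdef, hc]; exact fun he => hzo he.symm
    · simpa [hjdef, hc] using Ne.symm hc
  set L : List (Fin t × Bool) := w.toWord with hLw
  have hred : FreeGroup.reduce L = L := w.reduce_toWord
  have e1 : (FreeGroup.of j * w).toWord = (j, true) :: L := by
    conv_lhs => rw [← FreeGroup.mk_toWord (x := w)]
    rw [show FreeGroup.of j = FreeGroup.mk [(j, true)] from rfl, FreeGroup.mul_mk,
      FreeGroup.toWord_mk, List.singleton_append, FreeGroup.reduce.cons, hred, hLdef]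
    simp only []
    rw [if_neg (by rintro ⟨h1, -⟩; exact hjne h1), ← hLdef]
  have e2 : (w * FreeGroup.of j).toWord = FreeGroup.reduce (L ++ [(j, true)]) := by
    conv_lhs => rw [← FreeGroup.mk_toWord (x := w)]
    rw [show FreeGroup.of j = FreeGroup.mk [(j, true)] from rfl, FreeGroup.mul_mk,
      FreeGroup.toWord_mk]
  have key : FreeGroup.reduce (L ++ [(j, true)]) = (j, true) :: L := by
    rw [← e2, ← (h j), e1]
  set M : List (Fin t × Bool) := invRev L with hM
  have hMred : FreeGroup.reduce M = M := by
    rw [hM, FreeGroup.reduce_invRev, hred]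
  have hMne : M ≠ [] := by
    intro h'
    apply hL
    have := congrArg invRev h'
    rwa [hM, invRev_invRev, invRev_empty] at this
  obtain ⟨m, ms, hMdef⟩ := List.exists_cons_of_ne_nil hMne
  have keyM : FreeGroup.reduce ((j, false) :: M) = M ++ [(j, false)] := by
    have h1 : invRev (L ++ [(j, true)]) = (j, false) :: M := by
      rw [invRev_append', hM]; rfl
    have h2 : FreeGroup.reduce (invRev (L ++ [(j, true)])) =
        invRev (FreeGroup.reduce (L ++ [(j, true)])) := FreeGroup.reduce_invRev
    rw [h1] at h2
    rw [h2, key]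
    rw [show ((j, true) :: L : List (Fin t × Bool)) = [(j,true)] ++ L from rfl, invRev_append']
    rfl
  rw [FreeGroup.reduce.cons, hMred, hMdef] at keyM
  simp only [] at keyM
  by_cases hc : j = m.1 ∧ false = !m.2
  · rw [if_pos hc] at keyM
    have := congrArg List.length keyM
    simp [hMdef] at this
    omega
  · rw [if_neg hc, ← hMdef] at keyM
    have h3 := congrArg invRev keyM
    rw [show ((j, false) :: M : List (Fin t × Bool)) = [(j,false)] ++ M from rfl,
      invRev_append', invRev_append', hM, invRev_invRev] at h3
    have h4 : (invRev [((j : Fin t), false)]) = [(j, true)] := rfl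
    rw [h4] at h3
    rw [hLdef] at h3
    have h5 : (j, true) = hd := by
      have := congrArg (fun l => l.head?) h3
      simpa using this.symm
    exact hjne (by rw [← h5])

-- ===== end auxiliary lemmas =====

/-- For `t ≥ 2` and nonzero quaternions `x⁽¹⁾, …, x⁽ᵗ⁾ ∈ ℍ(ℚ)`,
the rotation matrices `ϑ(x⁽¹⁾), …, ϑ(x⁽ᵗ⁾)` freely generate a free subgroup of
rank `t` of the group of invertible 3×3 rational matrices iff
`x⁽¹⁾, …, x⁽ᵗ⁾` freely generate a free subgroup of rank `t` of the units
of `ℍ(ℚ)`. -/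
theorem rotations_free_iff_quaternions_free
    (t : ℕ) (ht : 2 ≤ t) (x : Fin t → Quaternion ℚ) (hx : ∀ i, x i ≠ 0) :
    Function.Injective
      (FreeGroup.lift (fun i : Fin t =>
        Matrix.GeneralLinearGroup.mkOfDetNeZero (quaternionRotation (x i))
          (by rw [quaternionRotation_det (x i) (hx i)]; norm_num))) ↔
    Function.Injective
      (FreeGroup.lift (fun i : Fin t => Units.mk0 (x i) (hx i))) := by
  set fQ : FreeGroup (Fin t) →* (Quaternion ℚ)ˣ :=
    FreeGroup.lift (fun i : Fin t => Units.mk0 (x i) (hx i)) with hfQ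
  have hcomp : (FreeGroup.lift (fun i : Fin t =>
        Matrix.GeneralLinearGroup.mkOfDetNeZero (quaternionRotation (x i))
          (by rw [quaternionRotation_det (x i) (hx i)]; norm_num))) = thetaHom.comp fQ := by
    apply FreeGroup.ext_hom
    intro i
    simp only [MonoidHom.comp_apply, hfQ, FreeGroup.lift_apply_of]
    apply Units.ext
    rfl
  rw [hcomp]
  constructor
  · intro hGL
    have : Function.Injective (⇑thetaHom ∘ ⇑fQ) := hGL
    exact this.of_comp
  · intro hQ
    rw [injective_iff_map_eq_one]
    intro w hw
    have hmat : quaternionRotation ((fQ w : (Quaternion ℚ)ˣ) : Quaternion ℚ) = 1 := by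
      have := congrArg (fun g : Matrix.GeneralLinearGroup (Fin 3) ℚ =>
        (g : Matrix (Fin 3) (Fin 3) ℚ)) hw
      simpa [thetaHom_val] using this
    have hreal : ((fQ w : (Quaternion ℚ)ˣ) : Quaternion ℚ)
        = (((fQ w : (Quaternion ℚ)ˣ) : Quaternion ℚ).re : Quaternion ℚ) :=
      quaternionRotation_eq_one _ (Units.ne_zero _) hmat
    apply freeGroup_commute_of_eq_one ht
    intro i
    apply hQ
    rw [map_mul, map_mul]
    apply Units.ext
    rw [Units.val_mul, Units.val_mul]
    rw [hreal]
    exact (Quaternion.coe_commute _ _).symm.eq
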